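/- Let W¹((−1,1)) = {f ∈ L²((−1,1)) : f' ∈ L²((−1,1))} (weak derivative) and W₀¹((−1,1)) = {f ∈ W¹((−1,1)) : f(−1) = f(1) = 0} (using the continuous representative). Define the Dirichlet form 𝓔 on L²((−1,1)) with domain W₀¹((−1,1)) by 𝓔(f) = ∫_{−1}^{1} |f'|² dλ + f(0)², the forms 𝓔₁ with domain W¹((−1,1)), 𝓔₁(f) = ∫|f'|² + (f(0) − f(1))², and 𝓔₂ with domain W¹((−1,1)), 𝓔₂(f) = ∫|f'|² + f(0)². Then there is no quadratic form Ẽ on L²((−1,1)) extending 𝓔 such that Ẽ ≤ 𝓔₁ and Ẽ ≤ 𝓔₂ in the sense of quadratic forms (i.e., D(𝓔ᵢ) ⊆ D(Ẽ) and Ẽ(f) ≤ 𝓔ᵢ(f) on D(𝓔ᵢ)) — in particular 𝓔 has no maximal Silverstein extension. -/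

import Mathlib

open MeasureTheory ENNReal

/-- `f ∈ W¹((-1,1))` with weak derivative `g`: both are square integrable on
`(-1,1)` and `f` (its continuous representative) is given by the fundamental
theorem of calculus from `g`. -/
def SobDeriv (f g : ℝ → ℝ) : Prop :=
  MemLp f 2 (volume.restrict (Set.Ioo (-1 : ℝ) 1)) ∧
  MemLp g 2 (volume.restrict (Set.Ioo (-1 : ℝ) 1)) ∧
  ∀ x ∈ Set.Icc (-1 : ℝ) 1, f x = f (-1) + ∫ t in (-1)..x, g t

lemma memL2_of_bound {f : ℝ → ℝ} (hf : Continuous f) (C : ℝ)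
    (h : ∀ x ∈ Set.Ioo (-1:ℝ) 1, |f x| ≤ C) :
    MemLp f 2 (volume.restrict (Set.Ioo (-1 : ℝ) 1)) := by
  have : IsFiniteMeasure (volume.restrict (Set.Ioo (-1:ℝ) 1)) :=
    ⟨by rw [Measure.restrict_apply_univ]; simp [Real.volume_Ioo]⟩
  exact MemLp.of_bound hf.aestronglyMeasurable C <|
    (ae_restrict_iff' measurableSet_Ioo).2 (ae_of_all _ fun x hx => by
      simpa [Real.norm_eq_abs] using h x hx)

theorem stmt11 :
    ¬ ∃ Et : (ℝ → ℝ) → ℝ≥0∞,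
      -- Ẽ is a quadratic form
      (∀ (l : ℝ) (f : ℝ → ℝ), Et (l • f) = ENNReal.ofReal (l ^ 2) * Et f) ∧
      (∀ f g : ℝ → ℝ, Et (f + g) + Et (f - g) = 2 * Et f + 2 * Et g) ∧
      -- Ẽ extends 𝓔 (which is defined on W₀¹((-1,1)))
      (∀ f g : ℝ → ℝ, SobDeriv f g → f (-1) = 0 → f 1 = 0 →
        Et f = ENNReal.ofReal (∫ t in (-1)..1, (g t) ^ 2) +
          ENNReal.ofReal ((f 0) ^ 2)) ∧
      -- Ẽ ≤ 𝓔₁ on D(𝓔₁) = W¹((-1,1))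
      (∀ f g : ℝ → ℝ, SobDeriv f g →
        Et f ≤ ENNReal.ofReal (∫ t in (-1)..1, (g t) ^ 2) +
          ENNReal.ofReal ((f 0 - f 1) ^ 2)) ∧
      -- Ẽ ≤ 𝓔₂ on D(𝓔₂) = W¹((-1,1))
      (∀ f g : ℝ → ℝ, SobDeriv f g →
        Et f ≤ ENNReal.ofReal (∫ t in (-1)..1, (g t) ^ 2) +
          ENNReal.ofReal ((f 0) ^ 2)) := by
  rintro ⟨Et, hsmul, hpar, hext, h1, h2⟩
  -- test functions
  have mc1 : MemLp (fun _ : ℝ => (1:ℝ)) 2 (volume.restrict (Set.Ioo (-1:ℝ) 1)) :=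
    memL2_of_bound continuous_const 1 (fun x _ => by norm_num)
  have m0 : MemLp (fun _ : ℝ => (0:ℝ)) 2 (volume.restrict (Set.Ioo (-1:ℝ) 1)) :=
    memL2_of_bound continuous_const 0 (fun x _ => by norm_num)
  have mf : MemLp (fun x : ℝ => x^2 - 1) 2 (volume.restrict (Set.Ioo (-1:ℝ) 1)) :=
    memL2_of_bound (by continuity) 1 (fun x hx => by
      rw [abs_le]; constructor <;> nlinarith [hx.1, hx.2, sq_nonneg x])
  have mg : MemLp (fun x : ℝ => 2*x) 2 (volume.restrict (Set.Ioo (-1:ℝ) 1)) :=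
    memL2_of_bound (by continuity) 2 (fun x hx => by
      rw [abs_le]; constructor <;> nlinarith [hx.1, hx.2])
  have mg' : MemLp (fun x : ℝ => -(2*x)) 2 (volume.restrict (Set.Ioo (-1:ℝ) 1)) := mg.neg
  have ftc : ∀ x : ℝ, ∫ t in (-1:ℝ)..x, 2*t = x^2 - 1 := fun x => by
    rw [intervalIntegral.integral_const_mul, integral_id]; ring
  have ftc' : ∀ x : ℝ, ∫ t in (-1:ℝ)..x, -(2*t) = -(x^2 - 1) := fun x => by
    rw [intervalIntegral.integral_neg, ftc]
  -- Sobolev facts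
  have sc1 : SobDeriv (fun _ : ℝ => (1:ℝ)) (fun _ : ℝ => (0:ℝ)) :=
    ⟨mc1, m0, fun x _ => by simp⟩
  have sf : SobDeriv (fun x : ℝ => x^2 - 1) (fun x : ℝ => 2*x) :=
    ⟨mf, mg, fun x _ => by rw [ftc]; norm_num⟩
  have sA : SobDeriv ((fun x : ℝ => x^2 - 1) + (fun _ : ℝ => (1:ℝ))) (fun x : ℝ => 2*x) :=
    ⟨mf.add mc1, mg, fun x _ => by simp [Pi.add_apply, ftc]⟩
  have sB : SobDeriv ((fun _ : ℝ => (1:ℝ)) - (fun x : ℝ => x^2 - 1)) (fun x => -(2*x)) :=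
    ⟨mc1.sub mf, mg', fun x _ => by simp [Pi.sub_apply, ftc']; ring⟩
  -- integral values
  have hint : ∫ t in (-1:ℝ)..1, (2*t)^2 = 8/3 := by
    have : ∀ t : ℝ, (2*t)^2 = 4 * t^2 := fun t => by ring
    simp_rw [this]
    rw [intervalIntegral.integral_const_mul, integral_pow]; norm_num
  have hint' : ∫ t in (-1:ℝ)..1, (-(2*t))^2 = 8/3 := by
    have : ∀ t : ℝ, (-(2*t))^2 = (2*t)^2 := fun t => by ring
    simp_rw [this]; exact hint
  -- Et of the constant 1 is 0
  have hc1 : Et (fun _ : ℝ => (1:ℝ)) = 0 := by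
    have := h1 _ _ sc1
    simpa using this
  -- Et f
  have hEf : Et (fun x : ℝ => x^2 - 1) = ENNReal.ofReal (8/3) + ENNReal.ofReal 1 := by
    have := hext _ _ sf (by norm_num) (by norm_num)
    rw [this, hint]; norm_num
  -- upper bounds
  have hA : Et ((fun x : ℝ => x^2 - 1) + (fun _ : ℝ => (1:ℝ))) ≤ ENNReal.ofReal (8/3) := by
    have := h2 _ _ sA
    simpa [hint] using this
  have hB : Et ((fun _ : ℝ => (1:ℝ)) - (fun x : ℝ => x^2 - 1)) ≤
      ENNReal.ofReal (8/3) + ENNReal.ofReal 1 := by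
    have := h1 _ _ sB
    rw [hint'] at this
    convert this using 3
    norm_num [Pi.sub_apply]
  -- parallelogram
  have hp := hpar ((fun x : ℝ => x^2 - 1) + (fun _ : ℝ => (1:ℝ)))
    ((fun _ : ℝ => (1:ℝ)) - (fun x : ℝ => x^2 - 1))
  have e1 : ((fun x : ℝ => x^2 - 1) + (fun _ : ℝ => (1:ℝ))) + ((fun _ : ℝ => (1:ℝ)) - (fun x : ℝ => x^2 - 1))
      = ((2:ℝ) • (fun _ : ℝ => (1:ℝ)) : ℝ → ℝ) := by funext x; simp; ring
  set_option synthInstance.maxHeartbeats 1000000 in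
  have e2 : ((fun x : ℝ => x^2 - 1) + (fun _ : ℝ => (1:ℝ))) - ((fun _ : ℝ => (1:ℝ)) - (fun x : ℝ => x^2 - 1))
      = ((2:ℝ) • (fun x : ℝ => (x^2 - 1 : ℝ)) : ℝ → ℝ) := by funext x; simp; ring
  rw [e1, e2, hsmul 2 (fun _ : ℝ => (1:ℝ)), hsmul 2 (fun x : ℝ => (x^2 - 1 : ℝ)), hc1, hEf, mul_zero, zero_add] at hp
  -- final contradiction
  have lhs : ENNReal.ofReal ((2:ℝ)^2) * (ENNReal.ofReal (8/3) + ENNReal.ofReal 1)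
      = ENNReal.ofReal (44/3) := by
    rw [← ENNReal.ofReal_add (by norm_num) (by norm_num), ← ENNReal.ofReal_mul (by norm_num)]
    norm_num
  rw [lhs] at hp
  have hle : ENNReal.ofReal (44/3) ≤ ENNReal.ofReal (38/3) := by
    rw [hp]
    calc 2 * Et ((fun x : ℝ => x^2 - 1) + (fun _ : ℝ => (1:ℝ)))
          + 2 * Et ((fun _ : ℝ => (1:ℝ)) - (fun x : ℝ => x^2 - 1))
        ≤ 2 * ENNReal.ofReal (8/3) + 2 * (ENNReal.ofReal (8/3) + ENNReal.ofReal 1) := by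
          gcongr
      _ = ENNReal.ofReal (38/3) := by
          rw [← ENNReal.ofReal_add (by norm_num) (by norm_num)]
          rw [show (2:ℝ≥0∞) = ENNReal.ofReal 2 by simp]
          rw [← ENNReal.ofReal_mul (by norm_num), ← ENNReal.ofReal_mul (by norm_num),
            ← ENNReal.ofReal_add (by norm_num) (by norm_num)]
          norm_num
  rw [ENNReal.ofReal_le_ofReal_iff (by norm_num)] at hle
  norm_num at hle
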